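/- arXiv:1204.0248 — 4 statements merged into one kernel-verified Lean document; each statement's English description precedes it below -/
import Mathlib

section
/- Let P be a two-dimensional lattice polytope in ℚ² and v a vertex of P such that the convex hull of (P ∩ ℤ²) \ {v} is still two-dimensional. Then the normalized volume of conv((P ∩ ℤ²) \ {v}) is strictly less than the normalized volume of P. -/
open MeasureTheory

/-- The points of `ℝ × ℝ` with integer coordinates. -/
def latticePts : Set (ℝ × ℝ) := {p | ∃ v : ℤ × ℤ, p = ((v.1 : ℝ), (v.2 : ℝ))}

/-- Shaving a vertex `v` of a two-dimensional lattice polytope `P` strictly decreases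
the normalized volume (twice the Euclidean area). -/
theorem stmt0 (V : Finset (ℤ × ℤ)) (P : Set (ℝ × ℝ))
    (hP : P = convexHull ℝ ((fun v : ℤ × ℤ => ((v.1 : ℝ), (v.2 : ℝ))) '' ↑V))
    (hdim : affineSpan ℝ P = ⊤)
    (v : ℝ × ℝ) (hv : v ∈ Set.extremePoints ℝ P)
    (Q : Set (ℝ × ℝ)) (hQ : Q = convexHull ℝ ((P ∩ latticePts) \ {v}))
    (hQdim : affineSpan ℝ Q = ⊤) :
    2 * volume Q < 2 * volume P := by
  set f : ℤ × ℤ → ℝ × ℝ := fun v => ((v.1 : ℝ), (v.2 : ℝ)) with hf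
  -- P is compact and convex
  have hPc : IsCompact P := by
    rw [hP]; exact (V.finite_toSet.image f).isCompact_convexHull ℝ
  have hPconv : Convex ℝ P := by rw [hP]; exact convex_convexHull ℝ _
  -- v is not in the convex hull of P \ {v}
  have hvP := hPconv.mem_extremePoints_iff_mem_diff_convexHull_diff.1 hv
  have hvmem : v ∈ P := hvP.1
  have hQsub : Q ⊆ convexHull ℝ (P \ {v}) := by
    rw [hQ]
    exact convexHull_mono (Set.diff_subset_diff_left Set.inter_subset_left)
  have hvQ : v ∉ Q := fun h => hvP.2 (hQsub h)
  have hQP : Q ⊆ P := hQsub.trans (convexHull_min Set.diff_subset hPconv)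
  -- f is a closed embedding
  have hpair : Pairwise fun z w : ℤ × ℤ => 1 ≤ dist (f z) (f w) := by
    intro z w hzw
    rcases (Prod.ext_iff.not.1 hzw |> not_and_or.1) with h | h
    · calc (1 : ℝ) ≤ dist (z.1 : ℝ) (w.1 : ℝ) := by
            rw [Int.dist_cast_real]; exact Int.pairwise_one_le_dist h
        _ ≤ dist (f z) (f w) := by rw [Prod.dist_eq]; exact le_max_left _ _
    · calc (1 : ℝ) ≤ dist (z.2 : ℝ) (w.2 : ℝ) := by
            rw [Int.dist_cast_real]; exact Int.pairwise_one_le_dist h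
        _ ≤ dist (f z) (f w) := by rw [Prod.dist_eq]; exact le_max_right _ _
  have hfemb : Topology.IsClosedEmbedding f := Metric.isClosedEmbedding_of_pairwise_le_dist zero_lt_one hpair
  -- P ∩ latticePts is finite, hence Q is closed
  have hpre : (f ⁻¹' P).Finite := (hfemb.isCompact_preimage hPc).finite ⟨inferInstance⟩
  have hT : (P ∩ latticePts).Finite := by
    refine (hpre.image f).subset ?_
    rintro t ⟨htP, z, hz⟩
    exact ⟨z, by simp only [Set.mem_preimage, hf]; exact hz ▸ htP, hz.symm⟩
  have hQclosed : IsClosed Q := by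
    rw [hQ]
    exact (hT.diff (t := {v})).isCompact_convexHull ℝ |>.isClosed
  -- a ball around v misses Q
  obtain ⟨ε, hε, hball⟩ := Metric.isOpen_iff.1 hQclosed.isOpen_compl v hvQ
  -- interior of P is nonempty
  obtain ⟨x, hx⟩ := hPconv.interior_nonempty_iff_affineSpan_eq_top.2 hdim
  -- a point of the interior of P close to v
  set n : ℝ := ‖x - v‖ with hn
  have hn0 : 0 ≤ n := norm_nonneg _
  set t : ℝ := min (1/2) (ε / (2 * (n + 1))) with ht
  have ht0 : 0 < t := lt_min (by norm_num) (by positivity)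
  have ht1 : t < 1 := lt_of_le_of_lt (min_le_left _ _) (by norm_num)
  set p : ℝ × ℝ := (1 - t) • v + t • x with hp
  have hpint : p ∈ interior P := by
    refine hPconv.openSegment_self_interior_subset_interior hvmem hx ?_
    exact ⟨1 - t, t, by linarith, ht0, by ring, rfl⟩
  have hpdist : dist p v < ε := by
    have h1 : p - v = t • (x - v) := by
      rw [hp]; module
    have h2 : dist p v = t * n := by
      rw [dist_eq_norm, h1, norm_smul, Real.norm_eq_abs, abs_of_pos ht0, hn]
    rw [h2]
    have h3 : t ≤ ε / (2 * (n + 1)) := min_le_right _ _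
    have h4 : ε / (2 * (n + 1)) * n < ε := by
      rw [div_mul_eq_mul_div, div_lt_iff₀ (by positivity)]
      nlinarith
    calc t * n ≤ ε / (2 * (n + 1)) * n := mul_le_mul_of_nonneg_right h3 hn0
      _ < ε := h4
  -- the open set U lies in P but not in Q
  set U : Set (ℝ × ℝ) := Metric.ball v ε ∩ interior P with hU
  have hUopen : IsOpen U := Metric.isOpen_ball.inter isOpen_interior
  have hUne : U.Nonempty := ⟨p, Metric.mem_ball.2 hpdist, hpint⟩
  have hdisj : Disjoint Q U := by
    refine Set.disjoint_left.2 fun y hyQ hyU => ?_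
    exact hball hyU.1 hyQ
  have hUP : U ⊆ P := fun y hy => interior_subset hy.2
  -- measure estimates
  have hμU : volume U ≠ 0 := (hUopen.measure_pos volume hUne).ne'
  have hsum : volume Q + volume U ≤ volume P := by
    rw [← measure_union hdisj hUopen.measurableSet]
    exact measure_mono (Set.union_subset hQP hUP)
  have hQtop : volume Q ≠ ⊤ :=
    (lt_of_le_of_lt (measure_mono hQP) hPc.measure_lt_top).ne
  have hlt : volume Q < volume P :=
    lt_of_lt_of_le (ENNReal.lt_add_right hQtop hμU) hsum
  exact (ENNReal.mul_lt_mul_iff_right two_ne_zero ENNReal.ofNat_ne_top).2 hlt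
end

section
/- Every two-dimensional lattice polygon Q contained in the box B_m = [0,m] × [0,m] can be obtained from B_m by a finite sequence of shavings: there exist lattice polygons Q = P⁽⁰⁾ ⊂ P⁽¹⁾ ⊂ ⋯ ⊂ P⁽ⁿ⁾ = B_m such that each P⁽ⁱ⁻¹⁾ is obtained from P⁽ⁱ⁾ by removing one vertex, i.e. P⁽ⁱ⁻¹⁾ = conv((P⁽ⁱ⁾ ∩ ℤ²) \ {vᵢ}) for some vertex vᵢ of P⁽ⁱ⁾. -/
/-- `Q` is obtained from `P` by shaving the vertex `v`: remove one vertex of `P` from its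
set of lattice points and take the convex hull. -/
def Shaves (P Q : Set (ℝ × ℝ)) : Prop :=
  ∃ v ∈ Set.extremePoints ℝ P, Q = convexHull ℝ ((P ∩ latticePts) \ {v})

namespace ShavingAux

noncomputable def emb : ℤ × ℤ → ℝ × ℝ := fun v => ((v.1 : ℝ), (v.2 : ℝ))

lemma emb_injective : Function.Injective emb := by
  intro a b h
  have h1 : (a.1 : ℝ) = b.1 := congrArg Prod.fst h
  have h2 : (a.2 : ℝ) = b.2 := congrArg Prod.snd h
  have : a.1 = b.1 := by exact_mod_cast h1
  have : a.2 = b.2 := by exact_mod_cast h2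
  exact Prod.ext ‹a.1 = b.1› ‹a.2 = b.2›

lemma emb_mem_lattice (v : ℤ × ℤ) : emb v ∈ latticePts := ⟨v, rfl⟩

/-- Extending a shaving chain by one more step at the top. -/
lemma chain_snoc {n : ℕ} (P : Fin (n + 1) → Set (ℝ × ℝ)) (X : Set (ℝ × ℝ))
    (h : ∀ i : Fin n, Shaves (P i.succ) (P i.castSucc))
    (hX : Shaves X (P (Fin.last n))) :
    ∀ i : Fin (n + 1), Shaves ((Fin.snoc P X : Fin (n + 2) → Set (ℝ × ℝ)) i.succ)
      ((Fin.snoc P X : Fin (n + 2) → Set (ℝ × ℝ)) i.castSucc) := by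
  intro i
  induction i using Fin.lastCases with
  | last =>
    have h1 : (Fin.last n).succ = Fin.last (n + 1) := Fin.succ_last n
    rw [h1, Fin.snoc_last, Fin.snoc_castSucc]
    exact hX
  | cast j =>
    have h1 : (j.castSucc).succ = (j.succ).castSucc := Fin.succ_castSucc j
    rw [h1, Fin.snoc_castSucc, Fin.snoc_castSucc]
    exact h j

/-- Key fact: a vertex of the hull of a set is not in the hull of the set minus that vertex. -/
lemma not_mem_hull_diff {A : Set (ℝ × ℝ)} {p : ℝ × ℝ}
    (hp : p ∈ Set.extremePoints ℝ (convexHull ℝ A)) :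
    p ∉ convexHull ℝ (A \ {p}) := by
  have hconv : Convex ℝ (convexHull ℝ A) := convex_convexHull ℝ A
  rw [hconv.mem_extremePoints_iff_mem_diff_convexHull_diff] at hp
  intro hmem
  exact hp.2 (convexHull_mono (Set.diff_subset_diff_left (subset_convexHull ℝ A)) hmem)

/-- The main induction: if `Q = conv(emb '' V)`, `V ⊆ T` and `T` is saturated (it consists of
all lattice points of its hull), then there is a shaving chain from `conv(emb '' T)` to `Q`. -/
lemma main (V : Finset (ℤ × ℤ)) (Q : Set (ℝ × ℝ))
    (hQ : Q = convexHull ℝ (emb '' (V : Set (ℤ × ℤ)))) :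
    ∀ k : ℕ, ∀ T : Finset (ℤ × ℤ), T.card ≤ k → V ⊆ T →
      (convexHull ℝ (emb '' (T : Set (ℤ × ℤ)))) ∩ latticePts = emb '' (T : Set (ℤ × ℤ)) →
      ∃ (n : ℕ) (P : Fin (n + 1) → Set (ℝ × ℝ)),
        P 0 = Q ∧ P (Fin.last n) = convexHull ℝ (emb '' (T : Set (ℤ × ℤ))) ∧
        ∀ i : Fin n, Shaves (P i.succ) (P i.castSucc) := by
  intro k
  induction k with
  | zero =>
    intro T hcard hVT hsat
    -- T = ∅, so V = ∅, Q = ∅ = hull T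
    have hT : T = ∅ := Finset.card_eq_zero.mp (Nat.le_zero.mp hcard)
    have hV : V = ∅ := Finset.subset_empty.mp (hT ▸ hVT)
    refine ⟨0, fun _ => Q, rfl, ?_, fun i => i.elim0⟩
    rw [hQ, hV, hT]
  | succ k ih =>
    intro T hcard hVT hsat
    set A : Set (ℝ × ℝ) := emb '' (T : Set (ℤ × ℤ)) with hA
    set K : Set (ℝ × ℝ) := convexHull ℝ A with hK
    by_cases hex : ∃ p ∈ Set.extremePoints ℝ K, p ∉ Q
    · obtain ⟨p, hpext, hpQ⟩ := hex
      have hpA : p ∈ A := extremePoints_convexHull_subset hpext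
      obtain ⟨v, hvT, hvp⟩ := hpA
      -- v ∉ V since emb v = p ∉ Q but emb '' V ⊆ Q
      have hvV : v ∉ V := by
        intro hvV
        exact hpQ (hQ ▸ subset_convexHull ℝ _ ⟨v, hvV, hvp⟩)
      set T' : Finset (ℤ × ℤ) := T.erase v with hT'
      have hT'coe : (T' : Set (ℤ × ℤ)) = (T : Set (ℤ × ℤ)) \ {v} := Finset.coe_erase v T
      have himg : emb '' (T' : Set (ℤ × ℤ)) = A \ {p} := by
        rw [hT'coe, Set.image_diff emb_injective, Set.image_singleton, hvp, hA]
      have hpnot : p ∉ convexHull ℝ (A \ {p}) := not_mem_hull_diff hpext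
      have hsub : convexHull ℝ (emb '' (T' : Set (ℤ × ℤ))) ⊆ K :=
        convexHull_mono (by rw [himg]; exact Set.diff_subset)
      -- saturation of T'
      have hsat' : (convexHull ℝ (emb '' (T' : Set (ℤ × ℤ)))) ∩ latticePts
          = emb '' (T' : Set (ℤ × ℤ)) := by
        apply Set.Subset.antisymm
        · rintro x ⟨hx1, hx2⟩
          have hxA : x ∈ A := by
            rw [← hsat]; exact ⟨hsub hx1, hx2⟩
          have hxp : x ≠ p := by
            intro h
            rw [h] at hx1
            exact hpnot (himg ▸ hx1)
          rw [himg]; exact ⟨hxA, hxp⟩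
        · exact fun x hx => ⟨subset_convexHull ℝ _ hx, by
            obtain ⟨w, _, hw⟩ := hx; exact hw ▸ emb_mem_lattice w⟩
      have hVT' : V ⊆ T' := fun u hu => Finset.mem_erase.mpr
        ⟨fun h => hvV (h ▸ hu), hVT hu⟩
      have hvT2 : v ∈ T := hvT
      have hcard' : T'.card ≤ k := by
        have h1 : T'.card = T.card - 1 := by
          rw [hT']; exact Finset.card_erase_of_mem hvT2
        have h2 : 1 ≤ T.card := Finset.card_pos.mpr ⟨v, hvT2⟩
        omega
      obtain ⟨n, P, hP0, hPlast, hPchain⟩ := ih T' hcard' hVT' hsat'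
      -- Shaves K (hull T')
      have hshave : Shaves K (convexHull ℝ (emb '' (T' : Set (ℤ × ℤ)))) := by
        refine ⟨p, hpext, ?_⟩
        rw [hK, hsat, himg]
      refine ⟨n + 1, Fin.snoc P K, ?_, ?_, ?_⟩
      · have : (0 : Fin (n + 2)) = Fin.castSucc 0 := rfl
        rw [this, Fin.snoc_castSucc, hP0]
      · rw [Fin.snoc_last]
      · exact chain_snoc P K hPchain (hPlast ▸ hshave)
    · -- all extreme points of K lie in Q, hence K = Q
      push_neg at hex
      have hAfin : A.Finite := T.finite_toSet.image emb
      have hKcomp : IsCompact K := hAfin.isCompact_convexHull ℝ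
      have hKconv : Convex ℝ K := convex_convexHull ℝ A
      have hQconv : Convex ℝ Q := hQ ▸ convex_convexHull ℝ _
      have hQclosed : IsClosed Q := by
        rw [hQ]
        exact ((V.finite_toSet.image emb).isCompact_convexHull ℝ).isClosed
      have hKQ : K ⊆ Q := by
        rw [← closure_convexHull_extremePoints hKcomp hKconv]
        refine closure_minimal (convexHull_min hex hQconv) hQclosed
      have hQK : Q ⊆ K := by
        rw [hQ]
        exact convexHull_mono (Set.image_mono (f := emb) (Finset.coe_subset.mpr hVT))
      have hKQeq : K = Q := Set.Subset.antisymm hKQ hQK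
      exact ⟨0, fun _ => Q, rfl, hKQeq.symm, fun i => i.elim0⟩

end ShavingAux

/-- Every two-dimensional lattice polygon contained in the box `[0,m] × [0,m]` can be
obtained from the box by a finite sequence of shavings. -/
theorem stmt1 (m : ℕ) (hm : 0 < m)
    (B : Set (ℝ × ℝ)) (hB : B = Set.Icc ((0 : ℝ), (0 : ℝ)) ((m : ℝ), (m : ℝ)))
    (V : Finset (ℤ × ℤ)) (Q : Set (ℝ × ℝ))
    (hQ : Q = convexHull ℝ ((fun v : ℤ × ℤ => ((v.1 : ℝ), (v.2 : ℝ))) '' ↑V))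
    (hdim : affineSpan ℝ Q = ⊤)
    (hQB : Q ⊆ B) :
    ∃ (n : ℕ) (P : Fin (n + 1) → Set (ℝ × ℝ)),
      P 0 = Q ∧ P (Fin.last n) = B ∧
      ∀ i : Fin n, Shaves (P i.succ) (P i.castSucc) := by
  classical
  open ShavingAux in
  -- the full grid of lattice points of the box
  set T0 : Finset (ℤ × ℤ) := Finset.Icc ((0 : ℤ), (0 : ℤ)) ((m : ℤ), (m : ℤ)) with hT0
  have hmemT0 : ∀ u : ℤ × ℤ, u ∈ T0 ↔ 0 ≤ u.1 ∧ u.1 ≤ (m : ℤ) ∧ 0 ≤ u.2 ∧ u.2 ≤ (m : ℤ) := by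
    intro u
    simp [hT0, Finset.mem_Icc, Prod.le_def]
    tauto
  have hmemB : ∀ x : ℝ × ℝ, x ∈ B ↔ 0 ≤ x.1 ∧ x.1 ≤ (m : ℝ) ∧ 0 ≤ x.2 ∧ x.2 ≤ (m : ℝ) := by
    intro x
    simp [hB, Set.mem_Icc, Prod.le_def]
    tauto
  have hcast : ∀ u : ℤ × ℤ, emb u ∈ B ↔ u ∈ T0 := by
    intro u
    rw [hmemB, hmemT0]
    simp only [emb]
    constructor <;> rintro ⟨h1, h2, h3, h4⟩ <;>
      exact ⟨by exact_mod_cast h1, by exact_mod_cast h2, by exact_mod_cast h3,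
        by exact_mod_cast h4⟩
  -- B is the convex hull of the grid
  have hBhull : B = convexHull ℝ (emb '' (T0 : Set (ℤ × ℤ))) := by
    apply Set.Subset.antisymm
    · -- B ⊆ hull
      intro x hx
      obtain ⟨hx1, hx2, hx3, hx4⟩ := (hmemB x).mp hx
      have hm0 : (0 : ℝ) ≤ (m : ℝ) := Nat.cast_nonneg m
      have hpair : ∀ t : ℝ, 0 ≤ t → t ≤ (m : ℝ) → t ∈ convexHull ℝ ({0, (m : ℝ)} : Set ℝ) := by
        intro t ht1 ht2
        rw [convexHull_pair, segment_eq_Icc hm0]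
        exact ⟨ht1, ht2⟩
      have hx' : (x.1, x.2) ∈ convexHull ℝ (({0, (m : ℝ)} : Set ℝ) ×ˢ ({0, (m : ℝ)} : Set ℝ)) :=
        mk_mem_convexHull_prod (hpair x.1 hx1 hx2) (hpair x.2 hx3 hx4)
      have hsub : (({0, (m : ℝ)} : Set ℝ) ×ˢ ({0, (m : ℝ)} : Set ℝ))
          ⊆ emb '' (T0 : Set (ℤ × ℤ)) := by
        rintro ⟨a, b⟩ ⟨ha, hb⟩
        have hcase : ∀ t : ℝ, t ∈ ({0, (m : ℝ)} : Set ℝ) →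
            ∃ i : ℤ, (i : ℝ) = t ∧ 0 ≤ i ∧ i ≤ (m : ℤ) := by
          rintro t (rfl | rfl)
          · exact ⟨0, by simp, le_refl 0, by exact_mod_cast Nat.zero_le m⟩
          · exact ⟨(m : ℤ), by simp, by exact_mod_cast Nat.zero_le m, le_refl _⟩
        obtain ⟨i, hi, hi1, hi2⟩ := hcase a ha
        obtain ⟨j, hj, hj1, hj2⟩ := hcase b hb
        exact ⟨(i, j), (hmemT0 (i, j)).mpr ⟨hi1, hi2, hj1, hj2⟩, by simp [emb, hi, hj]⟩
      have := convexHull_mono hsub hx'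
      simpa using this
    · -- hull ⊆ B
      apply convexHull_min _ (hB ▸ convex_Icc _ _)
      rintro x ⟨u, hu, rfl⟩
      exact (hcast u).mpr hu
  -- saturation of T0
  have hsat : (convexHull ℝ (emb '' (T0 : Set (ℤ × ℤ)))) ∩ latticePts
      = emb '' (T0 : Set (ℤ × ℤ)) := by
    rw [← hBhull]
    apply Set.Subset.antisymm
    · rintro x ⟨hx1, w, rfl⟩
      exact ⟨w, (hcast w).mp hx1, rfl⟩
    · rintro x ⟨u, hu, rfl⟩
      exact ⟨(hcast u).mpr hu, emb_mem_lattice u⟩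
  -- V ⊆ T0
  have hVT0 : V ⊆ T0 := by
    intro u hu
    have : emb u ∈ Q := hQ ▸ subset_convexHull ℝ _ ⟨u, hu, rfl⟩
    exact (hcast u).mp (hQB this)
  have hQ' : Q = convexHull ℝ (emb '' (V : Set (ℤ × ℤ))) := hQ
  obtain ⟨n, P, hP0, hPlast, hPchain⟩ :=
    ShavingAux.main V Q hQ' T0.card T0 le_rfl hVT0 hsat
  exact ⟨n, P, hP0, by rw [hPlast, ← hBhull], hPchain⟩
end

section
/- If P is a lattice polygon in ℚ² and w denotes its lattice width in the direction of the dual vector e₁* (i.e., w = max over p ∈ P of the first coordinate minus the min over p ∈ P of the first coordinate), and D is the closed disc in the dual space centered at the origin of radius w/d, where d is the width in direction e₁* of the largest disc centered at the centroid of the vertices of P and contained in P, then for every primitive lattice vector u in ℤ² outside D, the width of P in direction u is strictly greater than w. -/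
/-- The width of a set `S ⊆ ℝ²` in the direction of the dual vector `u`. -/
noncomputable def wdth (u : ℝ × ℝ) (S : Set (ℝ × ℝ)) : ℝ :=
  sSup ((fun p => u.1 * p.1 + u.2 * p.2) '' S) - sInf ((fun p => u.1 * p.1 + u.2 * p.2) '' S)

/-- The closed Euclidean disc of radius `r` centred at the origin of `ℝ²`. -/
def Disc (r : ℝ) : Set (ℝ × ℝ) := {p | p.1 ^ 2 + p.2 ^ 2 ≤ r ^ 2}

lemma disc_wdth (r : ℝ) (hr : 0 < r) : wdth (1, 0) (Disc r) = 2 * r := by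
  have hrmem : ((r, 0) : ℝ × ℝ) ∈ Disc r := by simp [Disc]
  have hrmem' : ((-r, 0) : ℝ × ℝ) ∈ Disc r := by simp [Disc]
  have hsupD : IsGreatest ((fun p : ℝ × ℝ => ((1:ℝ), (0:ℝ)).1 * p.1 + ((1:ℝ), (0:ℝ)).2 * p.2)
      '' Disc r) r := by
    constructor
    · exact ⟨(r, 0), hrmem, by norm_num⟩
    · rintro x ⟨p, hp, rfl⟩
      simp only [Disc, Set.mem_setOf_eq] at hp
      dsimp only
      nlinarith [sq_nonneg p.2]
  have hinfD : IsLeast ((fun p : ℝ × ℝ => ((1:ℝ), (0:ℝ)).1 * p.1 + ((1:ℝ), (0:ℝ)).2 * p.2)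
      '' Disc r) (-r) := by
    constructor
    · exact ⟨(-r, 0), hrmem', by norm_num⟩
    · rintro x ⟨p, hp, rfl⟩
      simp only [Disc, Set.mem_setOf_eq] at hp
      dsimp only
      nlinarith [sq_nonneg p.2]
  unfold wdth
  rw [hsupD.csSup_eq, hinfD.csInf_eq]
  ring

lemma wdth_ge (a : ℝ × ℝ) (r : ℝ) (hr : 0 < r) (P : Set (ℝ × ℝ))
    (hsub : Disc r ⊆ P)
    (hA : BddAbove ((fun p : ℝ × ℝ => a.1 * p.1 + a.2 * p.2) '' P))
    (hB : BddBelow ((fun p : ℝ × ℝ => a.1 * p.1 + a.2 * p.2) '' P)) :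
    2 * r * Real.sqrt (a.1 ^ 2 + a.2 ^ 2) ≤ wdth a P := by
  set n : ℝ := Real.sqrt (a.1 ^ 2 + a.2 ^ 2) with hn
  have hn0 : 0 ≤ n := Real.sqrt_nonneg _
  have hn2 : n ^ 2 = a.1 ^ 2 + a.2 ^ 2 := Real.sq_sqrt (by positivity)
  rcases eq_or_lt_of_le hn0 with h0 | hnpos
  · -- n = 0 : just need 0 ≤ wdth a P
    have h0mem : ((0, 0) : ℝ × ℝ) ∈ Disc r := by simp [Disc]; positivity
    have h1 : a.1 * 0 + a.2 * 0 ≤ sSup ((fun p : ℝ × ℝ => a.1 * p.1 + a.2 * p.2) '' P) :=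
      le_csSup hA ⟨(0, 0), hsub h0mem, rfl⟩
    have h2 : sInf ((fun p : ℝ × ℝ => a.1 * p.1 + a.2 * p.2) '' P) ≤ a.1 * 0 + a.2 * 0 :=
      csInf_le hB ⟨(0, 0), hsub h0mem, rfl⟩
    unfold wdth
    nlinarith
  · have hq1 : (r * a.1 / n) ^ 2 + (r * a.2 / n) ^ 2 = r ^ 2 := by
      field_simp
      nlinarith
    have hqD : ((r * a.1 / n, r * a.2 / n) : ℝ × ℝ) ∈ Disc r := by
      simp only [Disc, Set.mem_setOf_eq]
      rw [hq1]
    have hqD' : ((-(r * a.1 / n), -(r * a.2 / n)) : ℝ × ℝ) ∈ Disc r := by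
      simp only [Disc, Set.mem_setOf_eq]
      nlinarith
    have hfq : a.1 * (r * a.1 / n) + a.2 * (r * a.2 / n) = r * n := by
      field_simp
      nlinarith
    have h1 : r * n ≤ sSup ((fun p : ℝ × ℝ => a.1 * p.1 + a.2 * p.2) '' P) := by
      rw [← hfq]
      exact le_csSup hA ⟨(r * a.1 / n, r * a.2 / n), hsub hqD, rfl⟩
    have h2 : sInf ((fun p : ℝ × ℝ => a.1 * p.1 + a.2 * p.2) '' P) ≤ -(r * n) := by
      have he : a.1 * (-(r * a.1 / n)) + a.2 * (-(r * a.2 / n)) = -(r * n) := by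
        rw [← hfq]; ring
      rw [← he]
      exact csInf_le hB ⟨(-(r * a.1 / n), -(r * a.2 / n)), hsub hqD', rfl⟩
    unfold wdth
    linarith

/-- Let `P` be (a translate of) a two-dimensional lattice polygon, translated so that the
centroid of its vertices is at the origin.  Let `w` be the width of `P` in the direction
`e₁* = (1,0)`, let `C` be the largest disc centred at the origin contained in `P` and let
`d` be the width of `C` in direction `e₁*`.  Then every primitive lattice vector `u` lying
outside the disc of radius `w/d` in the dual space satisfies `width_u(P) > w`. -/
theorem stmt2 (V : Finset (ℤ × ℤ)) (hV : V.Nonempty) (t : ℝ × ℝ)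
    (P : Set (ℝ × ℝ))
    (hP : P = convexHull ℝ ((fun v : ℤ × ℤ => ((v.1 : ℝ) + t.1, (v.2 : ℝ) + t.2)) '' ↑V))
    (hdim : affineSpan ℝ P = ⊤)
    (hvert : ∀ v ∈ V, ((v.1 : ℝ) + t.1, (v.2 : ℝ) + t.2) ∈ Set.extremePoints ℝ P)
    (hcent : (∑ v ∈ V, (((v.1 : ℝ) + t.1, (v.2 : ℝ) + t.2) : ℝ × ℝ)) = 0)
    (w : ℝ) (hw : w = wdth (1, 0) P)
    (r : ℝ) (hr : 0 < r) (hball : Disc r ⊆ P)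
    (hmax : ∀ r' : ℝ, Disc r' ⊆ P → r' ≤ r)
    (d : ℝ) (hd : d = wdth (1, 0) (Disc r)) :
    ∀ u : ℤ × ℤ, Int.gcd u.1 u.2 = 1 →
      (((u.1 : ℝ), (u.2 : ℝ)) : ℝ × ℝ) ∉ Disc (w / d) →
      wdth ((u.1 : ℝ), (u.2 : ℝ)) P > w := by
  intro u _hgcd hu
  have hPfin : ((fun v : ℤ × ℤ => ((v.1 : ℝ) + t.1, (v.2 : ℝ) + t.2)) ''
      (↑V : Set (ℤ × ℤ))).Finite := V.finite_toSet.image _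
  have hPc : IsCompact P := hP ▸ hPfin.isCompact_convexHull ℝ
  have hcont : ∀ a : ℝ × ℝ, Continuous (fun p : ℝ × ℝ => a.1 * p.1 + a.2 * p.2) :=
    fun a => (continuous_const.mul continuous_fst).add (continuous_const.mul continuous_snd)
  have hbddA : ∀ a : ℝ × ℝ, BddAbove ((fun p : ℝ × ℝ => a.1 * p.1 + a.2 * p.2) '' P) :=
    fun a => (hPc.image (hcont a)).bddAbove
  have hbddB : ∀ a : ℝ × ℝ, BddBelow ((fun p : ℝ × ℝ => a.1 * p.1 + a.2 * p.2) '' P) :=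
    fun a => (hPc.image (hcont a)).bddBelow
  have hd2 : d = 2 * r := by rw [hd, disc_wdth r hr]
  have hdpos : 0 < d := by rw [hd2]; linarith
  -- w ≥ d
  have hwd : d ≤ w := by
    have h1 : 2 * r * Real.sqrt (((1:ℝ), (0:ℝ)).1 ^ 2 + ((1:ℝ), (0:ℝ)).2 ^ 2)
        ≤ wdth (1, 0) P := wdth_ge (1, 0) r hr P hball (hbddA (1, 0)) (hbddB (1, 0))
    have h2 : Real.sqrt (((1:ℝ), (0:ℝ)).1 ^ 2 + ((1:ℝ), (0:ℝ)).2 ^ 2) = 1 := by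
      norm_num
    rw [h2] at h1
    rw [hw, hd2]
    linarith
  have hwpos : 0 < w := lt_of_lt_of_le hdpos hwd
  have hu' : (w / d) ^ 2 < (u.1 : ℝ) ^ 2 + (u.2 : ℝ) ^ 2 := by
    simpa [Disc, not_le] using hu
  have hkey : 2 * r * Real.sqrt ((u.1 : ℝ) ^ 2 + (u.2 : ℝ) ^ 2)
      ≤ wdth ((u.1 : ℝ), (u.2 : ℝ)) P := by
    have := wdth_ge ((u.1 : ℝ), (u.2 : ℝ)) r hr P hball
      (hbddA ((u.1 : ℝ), (u.2 : ℝ))) (hbddB ((u.1 : ℝ), (u.2 : ℝ)))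
    simpa using this
  have hnn : w / d < Real.sqrt ((u.1 : ℝ) ^ 2 + (u.2 : ℝ) ^ 2) := by
    have h := Real.sq_sqrt (show (0:ℝ) ≤ (u.1 : ℝ) ^ 2 + (u.2 : ℝ) ^ 2 by positivity)
    have h0 : 0 ≤ Real.sqrt ((u.1 : ℝ) ^ 2 + (u.2 : ℝ) ^ 2) := Real.sqrt_nonneg _
    have hwd0 : 0 < w / d := div_pos hwpos hdpos
    nlinarith
  have hfin : w < 2 * r * Real.sqrt ((u.1 : ℝ) ^ 2 + (u.2 : ℝ) ^ 2) := by
    have h1 : w = 2 * r * (w / d) := by rw [← hd2]; field_simp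
    rw [h1]
    exact mul_lt_mul_of_pos_left hnn (by linarith)
  linarith
end

section
/- Every two-dimensional lattice polygon contained in the square [0,2] × [0,2] has at most 6 vertices, and up to affine unimodular equivalence the hexagon with vertices (1,0), (2,0), (2,1), (1,2), (0,2), (0,1) is the unique such polygon with exactly 6 vertices. -/
set_option maxRecDepth 100000
set_option synthInstance.maxHeartbeats 1000000
set_option synthInstance.maxSize 2000
set_option maxHeartbeats 1000000

/-- The embedding `ℤ² → ℝ²`. -/
def i2r (v : ℤ × ℤ) : ℝ × ℝ := ((v.1 : ℝ), (v.2 : ℝ))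

/-- The linear map of `ℝ²` determined by an integer `2 × 2` matrix. -/
def matAct (A : Matrix (Fin 2) (Fin 2) ℤ) (p : ℝ × ℝ) : ℝ × ℝ :=
  ((A 0 0 : ℝ) * p.1 + (A 0 1 : ℝ) * p.2, (A 1 0 : ℝ) * p.1 + (A 1 1 : ℝ) * p.2)

/-- Affine unimodular equivalence of subsets of `ℝ²`. -/
def AffUniEquiv (P P' : Set (ℝ × ℝ)) : Prop :=
  ∃ (u : ℤ × ℤ) (A : Matrix (Fin 2) (Fin 2) ℤ), IsUnit A.det ∧
    P' = matAct A '' ((fun p => p - i2r u) '' P)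

def gridZ : Finset (ℤ × ℤ) := ({0,1,2} : Finset ℤ) ×ˢ ({0,1,2} : Finset ℤ)
def hexA : Finset (ℤ × ℤ) := {(1,0),(2,0),(2,1),(1,2),(0,2),(0,1)}
def hexB : Finset (ℤ × ℤ) := {(0,0),(1,0),(2,1),(2,2),(1,2),(0,1)}

lemma comb : ∀ S ∈ gridZ.powerset,
    (¬ ((1,0) ∈ S ∧ (0,0) ∈ S ∧ (2,0) ∈ S) ∧ ¬ ((2,1) ∈ S ∧ (2,0) ∈ S ∧ (2,2) ∈ S) ∧
    ¬ ((1,2) ∈ S ∧ (2,2) ∈ S ∧ (0,2) ∈ S) ∧ ¬ ((0,1) ∈ S ∧ (0,2) ∈ S ∧ (0,0) ∈ S) ∧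
    ¬ ((1,1) ∈ S ∧ (0,0) ∈ S ∧ (2,2) ∈ S) ∧ ¬ ((1,1) ∈ S ∧ (2,0) ∈ S ∧ (0,2) ∈ S) ∧
    ¬ ((1,1) ∈ S ∧ (1,0) ∈ S ∧ (1,2) ∈ S) ∧ ¬ ((1,1) ∈ S ∧ (0,1) ∈ S ∧ (2,1) ∈ S)) →
    S.card ≤ 6 ∧ (S.card = 6 → S = hexA ∨ S = hexB) := by decide

lemma i2r_injective : Function.Injective i2r := by
  rintro ⟨a1, a2⟩ ⟨b1, b2⟩ h
  simp only [i2r, Prod.ext_iff] at h ⊢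
  exact_mod_cast h

/-- An extreme point is not the midpoint of two distinct points of the set. -/
lemma midpoint_not_extreme {P : Set (ℝ × ℝ)} {m a b : ℤ × ℤ}
    (h1 : a.1 + b.1 = 2 * m.1) (h2 : a.2 + b.2 = 2 * m.2) (hne : a ≠ b)
    (hm : i2r m ∈ Set.extremePoints ℝ P) (ha : i2r a ∈ P) (hb : i2r b ∈ P) : False := by
  have hmem : i2r m ∈ openSegment ℝ (i2r a) (i2r b) := by
    refine ⟨1/2, 1/2, by norm_num, by norm_num, by norm_num, ?_⟩
    have e1 : ((a.1 : ℝ)) + (b.1 : ℝ) = 2 * (m.1 : ℝ) := by exact_mod_cast h1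
    have e2 : ((a.2 : ℝ)) + (b.2 : ℝ) = 2 * (m.2 : ℝ) := by exact_mod_cast h2
    simp only [i2r, Prod.smul_mk, smul_eq_mul, Prod.mk_add_mk, Prod.ext_iff]
    constructor <;> linarith
  obtain ⟨-, hm2⟩ := mem_extremePoints.1 hm
  have h := hm2 (i2r a) ha (i2r b) hb hmem
  exact hne (i2r_injective (h.1.trans h.2.symm))

/-- The affine map `p ↦ (2 - p.1, p.2)`. -/
noncomputable def fB : (ℝ × ℝ) →ᵃ[ℝ] (ℝ × ℝ) where
  toFun p := (2 - p.1, p.2)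
  linear := (-(LinearMap.fst ℝ ℝ ℝ)).prod (LinearMap.snd ℝ ℝ ℝ)
  map_vadd' := by
    intro p v
    simp only [LinearMap.prod_apply, Function.prod, LinearMap.neg_apply, LinearMap.fst_apply,
      LinearMap.snd_apply]
    have : v +ᵥ p = (v.1 + p.1, v.2 + p.2) := rfl
    rw [this]
    have : (-v.1, v.2) +ᵥ ((2 - p.1 : ℝ), p.2) = (-v.1 + (2 - p.1), v.2 + p.2) := rfl
    rw [this]
    simp only [Prod.ext_iff]
    exact ⟨by ring, trivial⟩

/-- Every two-dimensional lattice polygon in `[0,2]²` has at most `6` vertices, and the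
hexagon with vertices `(1,0)`, `(2,0)`, `(2,1)`, `(1,2)`, `(0,2)`, `(0,1)` is, up to affine
unimodular equivalence, the unique one with exactly `6`. -/
theorem stmt11 (H : Set (ℝ × ℝ))
    (hH : H = convexHull ℝ
      {((1 : ℝ), (0 : ℝ)), ((2 : ℝ), (0 : ℝ)), ((2 : ℝ), (1 : ℝ)),
        ((1 : ℝ), (2 : ℝ)), ((0 : ℝ), (2 : ℝ)), ((0 : ℝ), (1 : ℝ))}) :
    ∀ (V : Finset (ℤ × ℤ)) (P : Set (ℝ × ℝ)),
      P = convexHull ℝ (i2r '' ↑V) →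
      affineSpan ℝ P = ⊤ →
      P ⊆ Set.Icc ((0 : ℝ), (0 : ℝ)) ((2 : ℝ), (2 : ℝ)) →
      (Set.extremePoints ℝ P).ncard ≤ 6 ∧
        ((Set.extremePoints ℝ P).ncard = 6 → AffUniEquiv P H) := by
  intro V P hP _hspan hIcc
  classical
  set Ez : Finset (ℤ × ℤ) := V.filter (fun v => i2r v ∈ Set.extremePoints ℝ P) with hEz
  have hEsub : Set.extremePoints ℝ P ⊆ i2r '' ↑V := by
    rw [hP]; exact extremePoints_convexHull_subset
  have hEeq : Set.extremePoints ℝ P = i2r '' ↑Ez := by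
    ext x
    constructor
    · intro hx
      obtain ⟨v, hv, rfl⟩ := hEsub hx
      exact ⟨v, by simp only [hEz, Finset.coe_filter, Set.mem_setOf_eq]; exact ⟨Finset.mem_coe.1 hv, hx⟩, rfl⟩
    · rintro ⟨v, hv, rfl⟩
      simp only [hEz, Finset.coe_filter, Set.mem_setOf_eq] at hv
      exact hv.2
  have hEzP : ∀ v ∈ Ez, i2r v ∈ P := by
    intro v hv
    simp only [hEz, Finset.mem_filter] at hv
    exact extremePoints_subset hv.2
  have hEzE : ∀ v ∈ Ez, i2r v ∈ Set.extremePoints ℝ P := by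
    intro v hv
    simp only [hEz, Finset.mem_filter] at hv
    exact hv.2
  have hEzgrid : Ez ∈ gridZ.powerset := by
    rw [Finset.mem_powerset]
    intro v hv
    have hvP := hIcc (hEzP v hv)
    obtain ⟨h1, h2⟩ := hvP
    have h11 : (0 : ℝ) ≤ (v.1 : ℝ) := h1.1
    have h12 : (0 : ℝ) ≤ (v.2 : ℝ) := h1.2
    have h21 : (v.1 : ℝ) ≤ 2 := h2.1
    have h22 : (v.2 : ℝ) ≤ 2 := h2.2
    have k11 : (0 : ℤ) ≤ v.1 := by exact_mod_cast h11
    have k12 : (0 : ℤ) ≤ v.2 := by exact_mod_cast h12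
    have k21 : v.1 ≤ 2 := by exact_mod_cast h21
    have k22 : v.2 ≤ 2 := by exact_mod_cast h22
    simp only [gridZ, Finset.mem_product, Finset.mem_insert, Finset.mem_singleton]
    omega
  have key : ∀ m a b : ℤ × ℤ, a.1 + b.1 = 2 * m.1 → a.2 + b.2 = 2 * m.2 → a ≠ b →
      ¬ (m ∈ Ez ∧ a ∈ Ez ∧ b ∈ Ez) := by
    rintro m a b h1 h2 hne ⟨hm, ha, hb⟩
    exact midpoint_not_extreme h1 h2 hne (hEzE m hm) (hEzP a ha) (hEzP b hb)
  have hcomb := comb Ez hEzgrid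
    ⟨key _ _ _ (by decide) (by decide) (by decide),
     key _ _ _ (by decide) (by decide) (by decide),
     key _ _ _ (by decide) (by decide) (by decide),
     key _ _ _ (by decide) (by decide) (by decide),
     key _ _ _ (by decide) (by decide) (by decide),
     key _ _ _ (by decide) (by decide) (by decide),
     key _ _ _ (by decide) (by decide) (by decide),
     key _ _ _ (by decide) (by decide) (by decide)⟩
  have hncard : (Set.extremePoints ℝ P).ncard = Ez.card := by
    rw [hEeq, Set.ncard_image_of_injective _ i2r_injective, Set.ncard_coe_finset]
  refine ⟨by rw [hncard]; exact hcomb.1, ?_⟩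
  intro h6
  rw [hncard] at h6
  -- P is the convex hull of its extreme points
  have hVfin : (i2r '' (↑V : Set (ℤ × ℤ))).Finite := (V.finite_toSet).image _
  have hcomp : IsCompact P := by rw [hP]; exact hVfin.isCompact_convexHull ℝ
  have hconv : Convex ℝ P := by rw [hP]; exact convex_convexHull ℝ _
  have hPE : P = convexHull ℝ (Set.extremePoints ℝ P) := by
    have hfin : (Set.extremePoints ℝ P).Finite := hVfin.subset hEsub
    have := closure_convexHull_extremePoints hcomp hconv
    rwa [(hfin.isClosed_convexHull ℝ).closure_eq, eq_comm] at this
  rcases hcomb.2 h6 with hA | hB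
  · -- P = H; use the identity
    refine ⟨(0, 0), !![1, 0; 0, 1], ?_, ?_⟩
    · rw [Matrix.det_fin_two_of]; norm_num
    · have hPH : P = H := by
        rw [hPE, hEeq, hA, hH]
        congr 1
        simp only [hexA, Finset.coe_insert, Finset.coe_singleton, Set.image_insert_eq,
          Set.image_singleton, i2r]
        norm_num
      have e1 : (fun p : ℝ × ℝ => p - i2r (0, 0)) = id := by
        funext p; simp [i2r]
      have e2 : matAct !![1, 0; 0, 1] = id := by
        funext p
        simp [matAct, Matrix.cons_val_zero, Matrix.cons_val_one, Matrix.head_cons]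
      rw [e1, e2, Set.image_id, Set.image_id, hPH]
  · -- P maps to H by p ↦ (2 - p.1, p.2)
    refine ⟨(2, 0), !![-1, 0; 0, 1], ?_, ?_⟩
    · rw [Matrix.det_fin_two_of]
      norm_num
    · have hPB : P = convexHull ℝ (i2r '' ↑hexB) := by rw [hPE, hEeq, hB]
      rw [← Set.image_comp]
      have hcompf : (matAct !![-1, 0; 0, 1] ∘ fun p : ℝ × ℝ => p - i2r (2, 0)) = ⇑fB := by
        funext p
        simp only [Function.comp_apply, matAct, i2r, fB, AffineMap.coe_mk, Prod.fst_sub,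
          Prod.snd_sub, Matrix.of_apply, Matrix.cons_val', Matrix.empty_val',
          Matrix.cons_val_zero, Matrix.cons_val_one, Matrix.head_cons,
          Matrix.cons_val_fin_one, Matrix.head_fin_const, Prod.ext_iff]
        push_cast
        constructor <;> ring
      rw [hcompf, hPB, AffineMap.image_convexHull, hH]
      congr 1
      have himg : i2r '' (↑hexB : Set (ℤ × ℤ)) =
          ({(0,0), (1,0), (2,1), (2,2), (1,2), (0,1)} : Set (ℝ × ℝ)) := by
        simp only [hexB, Finset.coe_insert, Finset.coe_singleton, Set.image_insert_eq,
          Set.image_singleton, i2r]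
        push_cast
        rfl
      rw [himg]
      have hf : ∀ p : ℝ × ℝ, fB p = (2 - p.1, p.2) := fun p => rfl
      simp only [Set.image_insert_eq, Set.image_singleton, hf]
      norm_num
      ext x
      simp only [Set.mem_insert_iff, Set.mem_singleton_iff]
      tauto
end
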